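/- Let K be a convex body (compact convex set with nonempty interior) in ℝ². If the central symmetral K̄ = (1/2)(K - K) is a parallelogram, then K is a translate of K̄. -/

import Mathlib

open Set Metric Pointwise

noncomputable section

abbrev Plane := EuclideanSpace ℝ (Fin 2)

/-- A convex body in the plane: compact, convex, with nonempty interior. -/
def IsConvexBody (K : Set Plane) : Prop :=
  IsCompact K ∧ Convex ℝ K ∧ (interior K).Nonempty

/-- Two sets touch: disjoint interiors but nonempty intersection. -/
def Touches (A B : Set Plane) : Prop :=
  Disjoint (interior A) (interior B) ∧ (A ∩ B).Nonempty

/-- A Hadwiger configuration for `S`: translates of `S` by the `x i`,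
pairwise non-overlapping, each touching `S`. -/
def IsHadwigerConfig (S : Set Plane) {n : ℕ} (x : Fin n → Plane) : Prop :=
  (∀ i, Touches (x i +ᵥ S) S) ∧
  ∀ i j, i ≠ j → Disjoint (interior (x i +ᵥ S)) (interior (x j +ᵥ S))

/-- The Hadwiger number of a set `S`. -/
def hadwiger (S : Set Plane) : ℕ :=
  sSup {n : ℕ | ∃ x : Fin n → Plane, IsHadwigerConfig S x}

/-- A topological disk: a set homeomorphic to the closed unit disk. -/
def IsTopDisk (S : Set Plane) : Prop :=
  Nonempty (S ≃ₜ (closedBall (0 : Plane) 1))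

/-- Cyclic successor on `Fin n`. -/
def cyclicSucc {n : ℕ} (hn : 0 < n) (i : Fin n) : Fin n :=
  ⟨(i + 1) % n, Nat.mod_lt _ hn⟩

/-- Points on the boundary of `C`, occurring in cyclic order along the boundary
(each consecutive pair spans an edge of the convex polygon they generate). -/
def IsInscribedCycle (C : Set Plane) {n : ℕ} (hn : 0 < n) (x : Fin n → Plane) : Prop :=
  (∀ i, x i ∈ frontier C) ∧
  ∀ i, segment ℝ (x i) (x (cyclicSucc hn i)) ⊆ frontier (convexHull ℝ (Set.range x))

/-- The perimeter of the boundary of `C` measured in the norm whose unit ball is `B`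
(via the gauge of `B`): supremum of perimeters of inscribed polygons. -/
def normPerimeter (B C : Set Plane) : ℝ :=
  sSup {s : ℝ | ∃ (n : ℕ) (hn : 0 < n) (x : Fin n → Plane), 3 ≤ n ∧
    IsInscribedCycle C hn x ∧ s = ∑ i, gauge B (x (cyclicSucc hn i) - x i)}

/-- A parallelogram: a translate of the convex hull of `{0, a, b, a+b}` with
`a, b` linearly independent (equivalently, an invertible affine image of a square). -/
def IsParallelogram (P : Set Plane) : Prop :=
  ∃ (v a b : Plane), LinearIndependent ℝ ![a, b] ∧
    P = v +ᵥ convexHull ℝ {0, a, b, a + b}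

/-- `J` is parallelogram-like: there is a unit direction `u` and two parallel
supporting lines of `conv J` with direction `u` whose intersections with `J` are
segments of the same positive length `lam`, and `lam • u + J` touches `J`. -/
def ParallelogramLike (J : Set Plane) : Prop :=
  ∃ (u w : Plane) (lam : ℝ) (p₁ q₁ p₂ q₂ : Plane),
    ‖u‖ = 1 ∧ w ≠ 0 ∧ (inner ℝ w u : ℝ) = 0 ∧ 0 < lam ∧
    J ∩ {y | (inner ℝ w y : ℝ) = sSup ((fun y => (inner ℝ w y : ℝ)) '' convexHull ℝ J)} =
      segment ℝ p₁ q₁ ∧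
    J ∩ {y | (inner ℝ w y : ℝ) = sInf ((fun y => (inner ℝ w y : ℝ)) '' convexHull ℝ J)} =
      segment ℝ p₂ q₂ ∧
    ‖q₁ - p₁‖ = lam ∧ ‖q₂ - p₂‖ = lam ∧
    Touches (lam • u +ᵥ J) J

open Module in
set_option maxHeartbeats 1000000 in
theorem aux_central_symmetral_translate (K : Set Plane) (hK : IsCompact K ∧ Convex ℝ K ∧ (interior K).Nonempty)
    (hpar : ∃ (v a b : Plane), LinearIndependent ℝ ![a, b] ∧
      (2⁻¹ : ℝ) • (K - K) = v +ᵥ convexHull ℝ {0, a, b, a + b}) :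
    ∃ t : Plane, K = t +ᵥ (2⁻¹ : ℝ) • (K - K) := by
  obtain ⟨hKc, hKconv, hKint⟩ := hK
  obtain ⟨v, a, b, hli, hKbar⟩ := hpar
  have hKne : K.Nonempty := hKint.mono interior_subset
  set Kb := (2⁻¹ : ℝ) • (K - K) with hKb
  -- basis and dual coordinates
  have hcard : Fintype.card (Fin 2) = Module.finrank ℝ Plane := by simp
  set B := basisOfLinearIndependentOfCardEqFinrank hli hcard with hBdef
  have hB0 : B 0 = a := by
    rw [hBdef, coe_basisOfLinearIndependentOfCardEqFinrank]; rfl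
  have hB1 : B 1 = b := by
    rw [hBdef, coe_basisOfLinearIndependentOfCardEqFinrank]; rfl
  set f : Plane →ₗ[ℝ] ℝ := B.coord 0 with hfdef
  set g : Plane →ₗ[ℝ] ℝ := B.coord 1 with hgdef
  have hfa : f a = 1 := by rw [hfdef, ← hB0]; simp [Basis.coord_apply]
  have hfb : f b = 0 := by rw [hfdef, ← hB1]; simp [Basis.coord_apply, Basis.repr_self_apply]
  have hga : g a = 0 := by rw [hgdef, ← hB0]; simp [Basis.coord_apply, Basis.repr_self_apply]
  have hgb : g b = 1 := by rw [hgdef, ← hB1]; simp [Basis.coord_apply]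
  have hrepr : ∀ x : Plane, x = f x • a + g x • b := by
    intro x
    have := B.sum_repr x
    rw [Fin.sum_univ_two, hB0, hB1] at this
    rw [hfdef, hgdef]; simp only [Basis.coord_apply]; exact this.symm
  set P := convexHull ℝ ({0, a, b, a + b} : Set Plane) with hPdef
  have hm0 : (0:Plane) ∈ ({0, a, b, a + b} : Set Plane) := by left; rfl
  have hma : a ∈ ({0, a, b, a + b} : Set Plane) := by right; left; rfl
  have hmb : b ∈ ({0, a, b, a + b} : Set Plane) := by right; right; left; rfl
  have hmab : a + b ∈ ({0, a, b, a + b} : Set Plane) := by right; right; right; rfl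
  -- slab characterization
  set S : Set Plane := {x | f x ∈ Icc (0:ℝ) 1 ∧ g x ∈ Icc (0:ℝ) 1} with hSdef
  have hSconv : Convex ℝ S := by
    have h1 : S = (f ⁻¹' Icc (0:ℝ) 1) ∩ (g ⁻¹' Icc (0:ℝ) 1) := rfl
    rw [h1]
    exact ((convex_Icc _ _).linear_preimage f).inter ((convex_Icc _ _).linear_preimage g)
  have hPsubS : P ⊆ S := by
    apply convexHull_min _ hSconv
    rintro x (rfl | rfl | rfl | rfl) <;>
      refine ⟨?_, ?_⟩ <;> simp [map_add, hfa, hfb, hga, hgb] <;> norm_num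
  have hSsubP : S ⊆ P := by
    rintro x ⟨⟨hf0, hf1⟩, hg0, hg1⟩
    have hs1 : f x • a ∈ segment ℝ (0:Plane) a :=
      ⟨1 - f x, f x, by linarith, hf0, by ring, by module⟩
    have hs2 : f x • a + b ∈ segment ℝ b (a + b) :=
      ⟨1 - f x, f x, by linarith, hf0, by ring, by module⟩
    have h1 : f x • a ∈ P := segment_subset_convexHull hm0 hma hs1
    have h2 : f x • a + b ∈ P := segment_subset_convexHull hmb hmab hs2
    have h3 : x ∈ segment ℝ (f x • a) (f x • a + b) := by
      refine ⟨1 - g x, g x, by linarith, hg0, by ring, ?_⟩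
      conv_rhs => rw [hrepr x]
      module
    exact (convex_convexHull ℝ _).segment_subset h1 h2 h3
  -- membership facts for Kb
  have hmemKb : ∀ z, z ∈ Kb ↔ -v + z ∈ P := by
    intro z; rw [hKbar]; exact Set.mem_vadd_set_iff_neg_vadd_mem
  have hmemKb' : ∀ z, z ∈ Kb ↔ ∃ p ∈ K, ∃ q ∈ K, z = (2⁻¹:ℝ) • (p - q) := by
    intro z
    constructor
    · rintro ⟨w, hw, rfl⟩
      obtain ⟨p, hp, q, hq, rfl⟩ := hw
      exact ⟨p, hp, q, hq, rfl⟩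
    · rintro ⟨p, hp, q, hq, rfl⟩
      exact ⟨p - q, ⟨p, hp, q, hq, rfl⟩, rfl⟩
  -- bounds of f, g on Kb
  have hfKb : ∀ z ∈ Kb, f v ≤ f z ∧ f z ≤ f v + 1 := by
    intro z hz
    have h := (hPsubS ((hmemKb z).1 hz)).1
    rw [Set.mem_Icc, map_add, map_neg] at h
    constructor <;> linarith [h.1, h.2]
  have hgKb : ∀ z ∈ Kb, g v ≤ g z ∧ g z ≤ g v + 1 := by
    intro z hz
    have h := (hPsubS ((hmemKb z).1 hz)).2
    rw [Set.mem_Icc, map_add, map_neg] at h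
    constructor <;> linarith [h.1, h.2]
  have hab : v + (a + b) ∈ Kb := by
    rw [hmemKb]
    have h : a + b ∈ P := subset_convexHull ℝ _ hmab
    rwa [neg_add_cancel_left]
  have h0v : v ∈ Kb := by
    rw [hmemKb]
    have h : (0:Plane) ∈ P := subset_convexHull ℝ _ hm0
    rwa [neg_add_cancel]
  -- extremizers of f and g on K
  obtain ⟨xM, hxM, hxMmax⟩ := hKc.exists_isMaxOn hKne (f.continuous_of_finiteDimensional).continuousOn
  obtain ⟨xm, hxm, hxmmin⟩ := hKc.exists_isMinOn hKne (f.continuous_of_finiteDimensional).continuousOn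
  obtain ⟨yM, hyM, hyMmax⟩ := hKc.exists_isMaxOn hKne (g.continuous_of_finiteDimensional).continuousOn
  obtain ⟨ym, hym, hymmin⟩ := hKc.exists_isMinOn hKne (g.continuous_of_finiteDimensional).continuousOn
  have hxMmax' : ∀ y ∈ K, f y ≤ f xM := fun y hy => hxMmax hy
  have hxmmin' : ∀ y ∈ K, f xm ≤ f y := fun y hy => hxmmin hy
  have hyMmax' : ∀ y ∈ K, g y ≤ g yM := fun y hy => hyMmax hy
  have hymmin' : ∀ y ∈ K, g ym ≤ g y := fun y hy => hymmin hy
  obtain ⟨p, hp, q, hq, hpq⟩ := (hmemKb' _).1 hab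
  obtain ⟨p', hp', q', hq', hpq'⟩ := (hmemKb' _).1 h0v
  -- width equals 1
  have hwf : f xM - f xm = 1 := by
    have h1 : (2⁻¹:ℝ) • (xM - xm) ∈ Kb := (hmemKb' _).2 ⟨xM, hxM, xm, hxm, rfl⟩
    have h2 : (2⁻¹:ℝ) • (xm - xM) ∈ Kb := (hmemKb' _).2 ⟨xm, hxm, xM, hxM, rfl⟩
    have e1 : f ((2⁻¹:ℝ) • (xM - xm)) = 2⁻¹ * (f xM - f xm) := by
      rw [map_smul, map_sub, smul_eq_mul]
    have e2 : f ((2⁻¹:ℝ) • (xm - xM)) = 2⁻¹ * (f xm - f xM) := by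
      rw [map_smul, map_sub, smul_eq_mul]
    have hb1 := (hfKb _ h1).2
    have hb2 := (hfKb _ h2).1
    rw [e1] at hb1; rw [e2] at hb2
    have e3 : f v + 1 = 2⁻¹ * (f p - f q) := by
      have h := congrArg f hpq
      rw [map_add, map_add, map_smul, map_sub, smul_eq_mul, hfa, hfb] at h
      linarith
    have e4 : f v = 2⁻¹ * (f p' - f q') := by
      have h := congrArg f hpq'
      rw [map_smul, map_sub, smul_eq_mul] at h
      linarith
    have b1 : f p - f q ≤ f xM - f xm := by
      have := hxMmax' p hp; have := hxmmin' q hq; linarith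
    have b2 : f xm - f xM ≤ f p' - f q' := by
      have := hxmmin' p' hp'; have := hxMmax' q' hq'; linarith
    linarith
  have hwg : g yM - g ym = 1 := by
    have h1 : (2⁻¹:ℝ) • (yM - ym) ∈ Kb := (hmemKb' _).2 ⟨yM, hyM, ym, hym, rfl⟩
    have h2 : (2⁻¹:ℝ) • (ym - yM) ∈ Kb := (hmemKb' _).2 ⟨ym, hym, yM, hyM, rfl⟩
    have e1 : g ((2⁻¹:ℝ) • (yM - ym)) = 2⁻¹ * (g yM - g ym) := by
      rw [map_smul, map_sub, smul_eq_mul]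
    have e2 : g ((2⁻¹:ℝ) • (ym - yM)) = 2⁻¹ * (g ym - g yM) := by
      rw [map_smul, map_sub, smul_eq_mul]
    have hb1 := (hgKb _ h1).2
    have hb2 := (hgKb _ h2).1
    rw [e1] at hb1; rw [e2] at hb2
    have e3 : g v + 1 = 2⁻¹ * (g p - g q) := by
      have h := congrArg g hpq
      rw [map_add, map_add, map_smul, map_sub, smul_eq_mul, hga, hgb] at h
      linarith
    have e4 : g v = 2⁻¹ * (g p' - g q') := by
      have h := congrArg g hpq'
      rw [map_smul, map_sub, smul_eq_mul] at h
      linarith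
    have b1 : g p - g q ≤ g yM - g ym := by
      have := hyMmax' p hp; have := hymmin' q hq; linarith
    have b2 : g ym - g yM ≤ g p' - g q' := by
      have := hymmin' p' hp'; have := hyMmax' q' hq'; linarith
    linarith
  -- the translation
  set t : Plane := (f xm - f v) • a + (g ym - g v) • b with htdef
  have hft : f t = f xm - f v := by
    rw [htdef, map_add, map_smul, map_smul, smul_eq_mul, smul_eq_mul, hfa, hfb]; ring
  have hgt : g t = g ym - g v := by
    rw [htdef, map_add, map_smul, map_smul, smul_eq_mul, smul_eq_mul, hga, hgb]; ring
  set A : Set Plane := (-t) +ᵥ K with hAdef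
  have hAsub : A ⊆ Kb := by
    rintro z ⟨x, hx, rfl⟩
    rw [hmemKb]
    apply hSsubP
    have ef : f (-v + (-t +ᵥ x)) = f x - f xm := by
      show f (-v + (-t + x)) = f x - f xm
      rw [map_add, map_add, map_neg, map_neg, hft]; ring
    have eg : g (-v + (-t +ᵥ x)) = g x - g ym := by
      show g (-v + (-t + x)) = g x - g ym
      rw [map_add, map_add, map_neg, map_neg, hgt]; ring
    refine ⟨?_, ?_⟩
    · rw [Set.mem_Icc, ef]
      have h1 := hxmmin' x hx
      have h2 := hxMmax' x hx
      constructor <;> linarith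
    · rw [Set.mem_Icc, eg]
      have h1 := hymmin' x hx
      have h2 := hyMmax' x hx
      constructor <;> linarith
  -- difference body identities
  have hnegKK : -(K - K) = K - K := by
    ext x; simp only [Set.mem_neg, Set.mem_sub]
    constructor
    · rintro ⟨p₁, hp₁, q₁, hq₁, h⟩; exact ⟨q₁, hq₁, p₁, hp₁, by rw [← neg_sub, h, neg_neg]⟩
    · rintro ⟨p₁, hp₁, q₁, hq₁, h⟩; exact ⟨q₁, hq₁, p₁, hp₁, by rw [← neg_sub, h]⟩
  have hKbdiff : Kb - Kb = K - K := by
    have hconvKK : Convex ℝ (K - K) := hKconv.sub hKconv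
    have h1 : -Kb = Kb := by
      rw [hKb, ← Set.smul_set_neg, hnegKK]
    calc Kb - Kb = Kb + Kb := by rw [sub_eq_add_neg, h1]
    _ = (2⁻¹ + 2⁻¹ : ℝ) • (K - K) := by rw [hKb, hconvKK.add_smul (by norm_num) (by norm_num)]
    _ = K - K := by norm_num
  have hAdiff : A - A = K - K := by
    rw [hAdef]
    ext x; simp only [Set.mem_sub, Set.mem_vadd_set]
    constructor
    · rintro ⟨_, ⟨p₁, hp₁, rfl⟩, _, ⟨q₁, hq₁, rfl⟩, rfl⟩
      exact ⟨p₁, hp₁, q₁, hq₁, by simp only [vadd_eq_add]; abel⟩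
    · rintro ⟨p₁, hp₁, q₁, hq₁, rfl⟩
      exact ⟨-t + p₁, ⟨p₁, hp₁, rfl⟩, -t + q₁, ⟨q₁, hq₁, rfl⟩, by abel⟩
  -- A = Kb by separation
  have hKbcomp : IsCompact Kb := by
    rw [hKb]
    have h : IsCompact (K - K) := by rw [sub_eq_add_neg]; exact hKc.add hKc.neg
    exact h.smul _
  have hAcomp : IsCompact A := hKc.vadd _
  have hAconv : Convex ℝ A := hKconv.vadd _
  have hAeq : A = Kb := by
    refine Subset.antisymm hAsub ?_
    by_contra hcon
    obtain ⟨z, hzKb, hzA⟩ := not_subset.1 hcon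
    obtain ⟨ℓ, u, hlt, hup⟩ := geometric_hahn_banach_closed_point hAconv hAcomp.isClosed hzA
    obtain ⟨bM, hbM, hbMmax⟩ := hKbcomp.exists_isMaxOn ⟨z, hzKb⟩ ℓ.continuous.continuousOn
    obtain ⟨bm, hbm, hbmmin⟩ := hKbcomp.exists_isMinOn ⟨z, hzKb⟩ ℓ.continuous.continuousOn
    have hmem : bM - bm ∈ A - A := by
      rw [hAdiff, ← hKbdiff]
      exact ⟨bM, hbM, bm, hbm, rfl⟩
    obtain ⟨x, hx, y, hy, hxy⟩ := hmem
    have e : ℓ bM - ℓ bm = ℓ x - ℓ y := by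
      have h := congrArg ℓ hxy
      rw [map_sub, map_sub] at h
      linarith
    have h1 : ℓ x < u := hlt x hx
    have h2 : ℓ bm ≤ ℓ y := hbmmin (hAsub hy)
    have h3 : ℓ z ≤ ℓ bM := hbMmax hzKb
    linarith
  refine ⟨t, ?_⟩
  rw [← hAeq, hAdef, vadd_vadd, add_neg_cancel, zero_vadd]

/-- If the central symmetral of a convex body `K` is a parallelogram,
then `K` is a translate of it. -/
theorem stmt_0 (K : Set Plane) (hK : IsConvexBody K)
    (hpar : IsParallelogram ((2⁻¹ : ℝ) • (K - K))) :
    ∃ t : Plane, K = t +ᵥ (2⁻¹ : ℝ) • (K - K) :=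
  aux_central_symmetral_translate K ⟨hK.1, hK.2.1, hK.2.2⟩ hpar
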